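/- Let d ≥ 2 and let σ be a sign pattern of length d+1 with exactly one sign change (c = 1). Then for every integer k with 0 ≤ k ≤ ⌊(d−1)/2⌋, the sign pattern σ is realizable with the pair (1, d−1−2k). -/

import Mathlib

open Polynomial

/-- A real polynomial `P` realizes the pair `(pos, neg)` if it has exactly `pos`
distinct positive roots and exactly `neg` distinct negative roots, all of them
simple, and no other real roots. -/
def realizesPair (P : Polynomial ℝ) (pos neg : ℕ) : Prop :=
  P.roots.Nodup ∧
  (P.roots.filter (fun x => 0 < x)).card = pos ∧
  (P.roots.filter (fun x => x < 0)).card = neg ∧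
  (0 : ℝ) ∉ P.roots

section Aux

open Finset

/-- A sign pattern with exactly one sign change is `-` up to some index `m-1`
and `+` from index `m` on. -/
lemma sp_sign_structure (d : ℕ) (σ : Fin (d + 1) → ℤ)
    (hσ : ∀ i, σ i = 1 ∨ σ i = -1)
    (hlead : σ (Fin.last d) = 1)
    (hc : (Finset.univ.filter (fun i : Fin d => σ i.castSucc ≠ σ i.succ)).card = 1) :
    ∃ m : ℕ, 1 ≤ m ∧ m ≤ d ∧
      ∀ j : Fin (d + 1), ((j : ℕ) < m → σ j = -1) ∧ (m ≤ (j : ℕ) → σ j = 1) := by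
  obtain ⟨i0, hi0⟩ := Finset.card_eq_one.mp hc
  have hmem : ∀ i : Fin d, σ i.castSucc ≠ σ i.succ ↔ i = i0 := by
    intro i
    constructor
    · intro h
      have : i ∈ Finset.univ.filter (fun i : Fin d => σ i.castSucc ≠ σ i.succ) := by
        simp [h]
      rw [hi0] at this; simpa using this
    · intro h
      rw [h]
      have : i0 ∈ Finset.univ.filter (fun i : Fin d => σ i.castSucc ≠ σ i.succ) := by
        rw [hi0]; simp
      simpa using this
  -- upward: j > i0 → σ j = 1, by downward induction on d - j
  have up : ∀ c : ℕ, ∀ j : ℕ, ∀ hj : j ≤ d, d - j = c → (i0 : ℕ) < j →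
      σ ⟨j, Nat.lt_succ_of_le hj⟩ = 1 := by
    intro c
    induction c with
    | zero =>
      intro j hj hc' _
      have : j = d := by omega
      subst this
      simpa [Fin.last] using hlead
    | succ c ih =>
      intro j hj hc' hij
      have hjd : j < d := by omega
      have hne : (⟨j, hjd⟩ : Fin d) ≠ i0 := by
        intro h; apply absurd hij; simp [← h]
      have heq : σ (Fin.castSucc ⟨j, hjd⟩) = σ (Fin.succ ⟨j, hjd⟩) := by
        by_contra h; exact hne ((hmem _).mp h)
      have := ih (j+1) hjd (by omega) (by omega)
      rw [show (⟨j, Nat.lt_succ_of_le hj⟩ : Fin (d+1)) = Fin.castSucc ⟨j, hjd⟩ from rfl,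
        heq]
      convert this using 2
      rfl
  have hsucc1 : σ (Fin.succ i0) = 1 := by
    have := up (d - ((i0:ℕ)+1)) ((i0:ℕ)+1) i0.isLt rfl (by omega)
    convert this using 2
    rfl
  have hcast : σ (Fin.castSucc i0) = -1 := by
    rcases hσ (Fin.castSucc i0) with h | h
    · exfalso; exact ((hmem i0).mpr rfl) (by rw [h, hsucc1])
    · exact h
  -- downward: j ≤ i0 → σ j = -1, by induction on i0 - j
  have down : ∀ c : ℕ, ∀ j : ℕ, ∀ hj : j ≤ (i0:ℕ), (i0:ℕ) - j = c →
      σ ⟨j, by omega⟩ = -1 := by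
    intro c
    induction c with
    | zero =>
      intro j hj hc'
      have : j = (i0:ℕ) := by omega
      subst this
      convert hcast using 2
      rfl
    | succ c ih =>
      intro j hj hc'
      have hji : j < (i0:ℕ) := by omega
      have hjd : j < d := by omega
      have hne : (⟨j, hjd⟩ : Fin d) ≠ i0 := by
        intro h
        rw [← h] at hji; simp at hji
      have heq : σ (Fin.castSucc ⟨j, hjd⟩) = σ (Fin.succ ⟨j, hjd⟩) := by
        by_contra h; exact hne ((hmem _).mp h)
      have := ih (j+1) (by omega) (by omega)
      rw [show (⟨j, by omega⟩ : Fin (d+1)) = Fin.castSucc ⟨j, hjd⟩ from rfl, heq]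
      convert this using 2
      rfl
  refine ⟨(i0:ℕ) + 1, by omega, by omega, ?_⟩
  intro j
  constructor
  · intro hj
    have := down ((i0:ℕ) - (j:ℕ)) (j:ℕ) (by omega) rfl
    convert this using 2
  · intro hj
    have := up (d - (j:ℕ)) (j:ℕ) (by omega) rfl (by omega)
    convert this using 2

/-- Signs of the coefficients of `(X+1)^(d-1) * (X - a)` with
`a = (2m-1)/(2(d-m)+1)`: negative below index `m`, positive from `m` on. -/
lemma sp_base_sign (d m : ℕ) (h1 : 1 ≤ m) (hmd : m ≤ d) (j : ℕ) (hj : j ≤ d) :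
    (m ≤ j → 0 < (((X + 1)^(d-1) * (X - C ((2*(m:ℝ) - 1)/(2*((d:ℝ) - m) + 1)))).coeff j)) ∧
    (j < m → (((X + 1)^(d-1) * (X - C ((2*(m:ℝ) - 1)/(2*((d:ℝ) - m) + 1)))).coeff j) < 0) := by
  set a : ℝ := (2*(m:ℝ) - 1)/(2*((d:ℝ) - m) + 1) with ha
  have hmdR : (m:ℝ) ≤ d := by exact_mod_cast hmd
  have hden : (0:ℝ) < 2*((d:ℝ) - m) + 1 := by linarith
  have hnum : (0:ℝ) < 2*(m:ℝ) - 1 := by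
    have : (1:ℝ) ≤ m := by exact_mod_cast h1
    linarith
  have hapos : 0 < a := div_pos hnum hden
  rcases Nat.eq_zero_or_pos j with rfl | hjpos
  · refine ⟨fun h => absurd h (by omega), fun _ => ?_⟩
    rw [mul_coeff_zero]
    simp only [coeff_X_add_one_pow, Nat.choose_zero_right, Nat.cast_one, one_mul,
      coeff_sub, coeff_X_zero, coeff_C_zero, zero_sub]
    linarith
  · obtain ⟨l, rfl⟩ : ∃ l, j = l + 1 := ⟨j - 1, by omega⟩
    rw [coeff_mul_X_sub_C, coeff_X_add_one_pow, coeff_X_add_one_pow]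
    set A : ℕ := (d-1).choose l with hA
    set B : ℕ := (d-1).choose (l+1) with hB
    have hld : l ≤ d - 1 := by omega
    have hApos : 0 < A := Nat.choose_pos hld
    have hid : (B:ℝ) * (l+1) = (A:ℝ) * ((d:ℝ) - 1 - l) := by
      have := Nat.choose_succ_right_eq (d-1) l
      have hcast : ((d-1).choose (l+1) : ℝ) * (l+1)
          = ((d-1).choose l : ℝ) * ((d-1-l : ℕ) : ℝ) := by
        exact_mod_cast this
      rw [hcast]
      congr 1
      push_cast [Nat.cast_sub hld, Nat.cast_sub (by omega : 1 ≤ d)]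
      ring
    have hAR : (1:ℝ) ≤ A := by exact_mod_cast hApos
    have hBR : (0:ℝ) ≤ B := by positivity
    constructor
    · intro hmj
      have hmjR : (m:ℝ) ≤ l + 1 := by exact_mod_cast hmj
      rw [sub_pos, ha, ← mul_div_assoc, div_lt_iff₀ hden]
      nlinarith [hid, hAR, hmjR, hmdR, mul_le_mul_of_nonneg_left hmjR (le_of_lt hnum)]
    · intro hjm
      have hjmR : ((l:ℝ) + 1) + 1 ≤ m := by exact_mod_cast hjm
      have hBpos : (1:ℝ) ≤ B := by
        have : 0 < B := Nat.choose_pos (by omega)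
        exact_mod_cast this
      rw [sub_neg, ha, ← mul_div_assoc, lt_div_iff₀ hden]
      nlinarith [hid, hAR, hjmR, hmdR, hBpos]

/-- The polynomial family, with parameter a polynomial variable. -/
noncomputable def spPHat (n k m d : ℕ) : Polynomial (Polynomial ℝ) :=
  (∏ i ∈ Finset.range n,
      (X + C (Polynomial.C 1 + Polynomial.C ((i:ℝ)+1) * Polynomial.X))) *
    ((X + 1)^2 + C Polynomial.X)^k *
    (X - C (Polynomial.C ((2*(m:ℝ) - 1)/(2*((d:ℝ) - m) + 1))))

/-- The polynomial family with the parameter specialized to `t`. -/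
noncomputable def spPt (n k m d : ℕ) (t : ℝ) : Polynomial ℝ :=
  (∏ i ∈ Finset.range n, (X + C (1 + ((i:ℝ)+1)*t))) *
    ((X + 1)^2 + C t)^k *
    (X - C ((2*(m:ℝ) - 1)/(2*((d:ℝ) - m) + 1)))

lemma spPt_eq_map (n k m d : ℕ) (t : ℝ) :
    spPt n k m d t = (spPHat n k m d).map (evalRingHom t) := by
  unfold spPt spPHat
  simp [Polynomial.map_mul, Polynomial.map_prod, Polynomial.map_pow, Polynomial.map_add,
    Polynomial.map_sub, Polynomial.map_one, map_C, map_X]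

lemma spPt_zero (n k m d : ℕ) :
    spPt n k m d 0 = (X + 1)^(n + 2*k) *
      (X - C ((2*(m:ℝ) - 1)/(2*((d:ℝ) - m) + 1))) := by
  unfold spPt
  congr 1
  have h : ∀ i ∈ Finset.range n, (X + C (1 + ((i:ℝ)+1)*0) : Polynomial ℝ) = X + 1 := by
    intro i _; simp
  rw [Finset.prod_congr rfl h, Finset.prod_const, Finset.card_range]
  simp only [map_zero, add_zero, ← pow_mul, ← pow_add]

lemma sp_quad_monic (t : ℝ) : ((X + 1 : Polynomial ℝ)^2 + C t).Monic := by
  have h1 : ((X + 1 : Polynomial ℝ)^2).Monic := by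
    simpa using (monic_X_add_C (1:ℝ)).pow 2
  refine h1.add_of_left ?_
  have : degree ((X + 1 : Polynomial ℝ)^2) = 2 := by
    rw [degree_pow, show (X + 1 : Polynomial ℝ) = X + C 1 by simp, degree_X_add_C]
    rfl
  rw [this]
  exact lt_of_le_of_lt degree_C_le (by norm_num)

lemma sp_quad_natDegree (t : ℝ) : ((X + 1 : Polynomial ℝ)^2 + C t).natDegree = 2 := by
  rw [natDegree_add_C, natDegree_pow, show (X + 1 : Polynomial ℝ) = X + C 1 by simp,
    natDegree_X_add_C]

lemma spPt_monic (n k m d : ℕ) (t : ℝ) : (spPt n k m d t).Monic := by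
  unfold spPt
  exact (((monic_prod_of_monic _ _ (fun i _ => monic_X_add_C _)).mul
    ((sp_quad_monic t).pow k)).mul (monic_X_sub_C _))

lemma spPt_natDegree (n k m d : ℕ) (t : ℝ) :
    (spPt n k m d t).natDegree = n + 2*k + 1 := by
  unfold spPt
  rw [Monic.natDegree_mul ((monic_prod_of_monic _ _ (fun i _ => monic_X_add_C _)).mul
    ((sp_quad_monic t).pow k)) (monic_X_sub_C _),
    Monic.natDegree_mul (monic_prod_of_monic _ _ (fun i _ => monic_X_add_C _))
    ((sp_quad_monic t).pow k),
    natDegree_prod _ _ (fun i _ => X_add_C_ne_zero _),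
    natDegree_pow, sp_quad_natDegree, natDegree_X_sub_C]
  simp only [natDegree_X_add_C, Finset.sum_const, Finset.card_range, smul_eq_mul, mul_one]
  ring

lemma sp_quad_roots (t : ℝ) (ht : 0 < t) : ((X + 1 : Polynomial ℝ)^2 + C t).roots = 0 := by
  rw [Multiset.eq_zero_iff_forall_notMem]
  intro x hx
  have hne : ((X + 1 : Polynomial ℝ)^2 + C t) ≠ 0 := (sp_quad_monic t).ne_zero
  have := isRoot_of_mem_roots hx
  have heval : (x + 1)^2 + t = 0 := by
    simpa [IsRoot, eval_pow] using this
  nlinarith [sq_nonneg (x + 1)]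

lemma spPt_roots (n k m d : ℕ) (t : ℝ) (ht : 0 < t) :
    (spPt n k m d t).roots =
      (Finset.range n).val.map (fun i : ℕ => -(1 + ((i:ℝ)+1)*t)) +
      {(2*(m:ℝ) - 1)/(2*((d:ℝ) - m) + 1)} := by
  unfold spPt
  have h1 : (∏ i ∈ Finset.range n, (X + C (1 + ((i:ℝ)+1)*t))) ≠ 0 :=
    (monic_prod_of_monic _ _ (fun i _ => monic_X_add_C _)).ne_zero
  have h2 : (((X + 1 : Polynomial ℝ)^2 + C t)^k) ≠ 0 := ((sp_quad_monic t).pow k).ne_zero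
  have h3 : (X - C ((2*(m:ℝ) - 1)/(2*((d:ℝ) - m) + 1))) ≠ 0 := (monic_X_sub_C _).ne_zero
  rw [roots_mul (mul_ne_zero (mul_ne_zero h1 h2) h3), roots_mul (mul_ne_zero h1 h2),
    roots_X_sub_C, roots_pow, sp_quad_roots t ht, roots_prod _ _ h1]
  have : ∀ i : ℕ, (X + C (1 + ((i:ℝ)+1)*t)).roots = {-(1 + ((i:ℝ)+1)*t)} := by
    intro i
    rw [show (X + C (1 + ((i:ℝ)+1)*t)) = X - C (-(1 + ((i:ℝ)+1)*t)) by
      rw [map_neg, sub_neg_eq_add], roots_X_sub_C]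
  simp only [this, smul_zero, add_zero]
  congr 1
  rw [Multiset.bind_singleton]

lemma spPt_realizes (n k m d : ℕ) (h1 : 1 ≤ m) (hmd : m ≤ d) (t : ℝ) (ht : 0 < t) :
    realizesPair (spPt n k m d t) 1 n := by
  have hmdR : (m:ℝ) ≤ d := by exact_mod_cast hmd
  have hnum : (0:ℝ) < 2*(m:ℝ) - 1 := by
    have : (1:ℝ) ≤ m := by exact_mod_cast h1
    linarith
  have hden : (0:ℝ) < 2*((d:ℝ) - m) + 1 := by linarith
  have hapos : 0 < (2*(m:ℝ) - 1)/(2*((d:ℝ) - m) + 1) := div_pos hnum hden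
  set a := (2*(m:ℝ) - 1)/(2*((d:ℝ) - m) + 1)
  rw [realizesPair, spPt_roots n k m d t ht]
  set g : ℕ → ℝ := fun i => -(1 + ((i:ℝ)+1)*t) with hg
  have hgneg : ∀ i : ℕ, g i < 0 := by
    intro i
    have : (0:ℝ) ≤ (i:ℝ) := Nat.cast_nonneg i
    simp only [hg]
    nlinarith
  have hM : ∀ x ∈ (Finset.range n).val.map g, x < 0 := by
    intro x hx
    obtain ⟨i, _, rfl⟩ := Multiset.mem_map.mp hx
    exact hgneg i
  refine ⟨?_, ?_, ?_, ?_⟩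
  · rw [Multiset.nodup_add]
    refine ⟨?_, Multiset.nodup_singleton a, ?_⟩
    · refine Multiset.Nodup.map ?_ (Finset.range n).nodup
      intro i j hij
      simp only [hg, neg_inj] at hij
      have h2 : ((i:ℝ)+1)*t = ((j:ℝ)+1)*t := by linarith
      have : ((i:ℝ)+1) = ((j:ℝ)+1) := mul_right_cancel₀ (ne_of_gt ht) h2
      exact_mod_cast add_right_cancel this
    · rw [Multiset.disjoint_left]
      intro x hx hx'
      have := hM x hx
      rw [Multiset.mem_singleton] at hx'
      subst hx'
      linarith
  · rw [Multiset.filter_add, Multiset.filter_singleton, if_pos hapos,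
      Multiset.filter_eq_nil.mpr (fun x hx => not_lt.mpr (le_of_lt (hM x hx)))]
    simp
  · rw [Multiset.filter_add, Multiset.filter_singleton, if_neg (by push_neg; linarith),
      Multiset.filter_eq_self.mpr hM]
    simp
  · intro h0
    rw [Multiset.mem_add] at h0
    rcases h0 with h0 | h0
    · exact absurd (hM 0 h0) (by norm_num)
    · rw [Multiset.mem_singleton] at h0
      exact absurd h0.symm (ne_of_gt hapos)

end Aux

/-- For `d ≥ 2`, any sign pattern (recorded as `σ j = ±1`, the sign of the
coefficient of `x^j`, with leading sign `+`) with exactly one sign change is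
realizable with the pair `(1, d - 1 - 2k)` for every `k ≤ ⌊(d-1)/2⌋`. -/
theorem stmt0 (d : ℕ) (hd : 2 ≤ d) (σ : Fin (d + 1) → ℤ)
    (hσ : ∀ i, σ i = 1 ∨ σ i = -1)
    (hlead : σ (Fin.last d) = 1)
    (hc : (Finset.univ.filter (fun i : Fin d => σ i.castSucc ≠ σ i.succ)).card = 1)
    (k : ℕ) (hk : k ≤ (d - 1) / 2) :
    ∃ P : Polynomial ℝ, P.Monic ∧ P.natDegree = d ∧
      (∀ j : Fin (d + 1), 0 < (σ j : ℝ) * P.coeff (j : ℕ)) ∧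
      realizesPair P 1 (d - 1 - 2 * k) := by
  obtain ⟨m, hm1, hmd, hsig⟩ := sp_sign_structure d σ hσ hlead hc
  set n := d - 1 - 2*k with hn
  have hnk : n + 2*k + 1 = d := by omega
  have hnk' : n + 2*k = d - 1 := by omega
  have hev : ∀ j : Fin (d+1), ∀ᶠ t in nhds (0:ℝ),
      0 < (σ j : ℝ) * (spPt n k m d t).coeff (j:ℕ) := by
    intro j
    have hcont : Continuous (fun t : ℝ => (σ j : ℝ) * (spPt n k m d t).coeff (j:ℕ)) := by
      have heq : (fun t : ℝ => (σ j : ℝ) * (spPt n k m d t).coeff (j:ℕ)) =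
          fun t : ℝ => (σ j : ℝ) * Polynomial.eval t ((spPHat n k m d).coeff (j:ℕ)) := by
        funext t
        rw [spPt_eq_map, coeff_map, coe_evalRingHom]
      rw [heq]
      exact continuous_const.mul (Polynomial.continuous _)
    have h0 : 0 < (σ j : ℝ) * (spPt n k m d 0).coeff (j:ℕ) := by
      rw [spPt_zero, hnk']
      obtain ⟨hge, hlt⟩ := sp_base_sign d m hm1 hmd (j:ℕ) (Nat.lt_succ_iff.mp j.isLt)
      rcases Nat.lt_or_ge (j:ℕ) m with h | h
      · rw [(hsig j).1 h]; have := hlt h; push_cast; nlinarith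
      · rw [(hsig j).2 h]; have := hge h; push_cast; nlinarith
    have hmemn : {t : ℝ | 0 < (σ j : ℝ) * (spPt n k m d t).coeff (j:ℕ)} ∈ nhds (0:ℝ) := by
      have := (isOpen_Ioi.preimage hcont).mem_nhds (by simpa using h0)
      simpa [Set.preimage] using this
    exact Filter.eventually_iff.mpr hmemn
  have hev' : ∀ᶠ t in nhds (0:ℝ), ∀ j : Fin (d+1),
      0 < (σ j : ℝ) * (spPt n k m d t).coeff (j:ℕ) := Filter.eventually_all.mpr hev
  have hev2 : ∀ᶠ t in nhdsWithin (0:ℝ) (Set.Ioi 0), ∀ j : Fin (d+1),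
      0 < (σ j : ℝ) * (spPt n k m d t).coeff (j:ℕ) :=
    hev'.filter_mono nhdsWithin_le_nhds
  have hpos : ∀ᶠ t in nhdsWithin (0:ℝ) (Set.Ioi 0), t ∈ Set.Ioi (0:ℝ) :=
    eventually_mem_nhdsWithin
  obtain ⟨t, ht, hts⟩ := (hpos.and hev2).exists
  refine ⟨spPt n k m d t, spPt_monic n k m d t, ?_, fun j => hts j, ?_⟩
  · rw [spPt_natDegree]; omega
  · exact spPt_realizes n k m d hm1 hmd t ht
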